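/- arXiv:1602.00836 — 7 statements merged into one kernel-verified Lean document; each statement's English description precedes it below -/
import Mathlib

section
/- Let A be a nonsingular n×n matrix over K[x] that is row reduced (its row-wise leading coefficient matrix is invertible). Then the transpose of the adjugate adj(A)^T is also row reduced, and if η_i denotes the degree of the i-th row of A and η = η_1 + ... + η_n, then the i-th row of adj(A)^T has degree exactly η - η_i. -/
open Polynomial Matrix

/-- Degree of row `i` of a polynomial matrix: max of the natural degrees of its entries. -/
noncomputable def rowDegNat {K : Type*} [Field K] {n m : ℕ}
    (A : Matrix (Fin n) (Fin m) K[X]) (i : Fin n) : ℕ :=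
  Finset.univ.sup fun j => (A i j).natDegree

/-- Row-wise leading coefficient matrix. -/
noncomputable def leadingMatrix {K : Type*} [Field K] {n m : ℕ}
    (A : Matrix (Fin n) (Fin m) K[X]) : Matrix (Fin n) (Fin m) K :=
  Matrix.of fun i j => (A i j).coeff (rowDegNat A i)

private lemma coeff_prod_deg {K : Type*} [Field K] {ι : Type*} (s : Finset ι)
    (f : ι → K[X]) (d : ι → ℕ) (h : ∀ i ∈ s, (f i).natDegree ≤ d i) :
    (∏ i ∈ s, f i).coeff (∑ i ∈ s, d i) = ∏ i ∈ s, (f i).coeff (d i) := by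
  induction s using Finset.cons_induction with
  | empty => simp
  | cons a s ha ih =>
    rw [Finset.prod_cons, Finset.sum_cons, Finset.prod_cons,
      Polynomial.coeff_mul_add_eq_of_natDegree_le (h a (Finset.mem_cons_self a s))
        (Polynomial.natDegree_prod_le _ _ |>.trans
          (Finset.sum_le_sum fun i hi => h i (Finset.mem_cons_of_mem hi))),
      ih fun i hi => h i (Finset.mem_cons_of_mem hi)]

private lemma natDegree_det_le {K : Type*} [Field K] {n : ℕ}
    (B : Matrix (Fin n) (Fin n) K[X]) (d : Fin n → ℕ)
    (h : ∀ i j, (B i j).natDegree ≤ d i) :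
    B.det.natDegree ≤ ∑ i, d i := by
  rw [Matrix.det_apply']
  refine Polynomial.natDegree_sum_le_of_forall_le _ _ fun σ _ => ?_
  refine (Polynomial.natDegree_mul_le).trans ?_
  rw [Polynomial.natDegree_intCast, zero_add]
  refine (Polynomial.natDegree_prod_le _ _).trans ?_
  calc ∑ i, (B (σ i) i).natDegree ≤ ∑ i, d (σ i) :=
        Finset.sum_le_sum fun i _ => h (σ i) i
    _ = ∑ i, d i := Equiv.sum_comp σ d

private lemma coeff_det {K : Type*} [Field K] {n : ℕ}
    (B : Matrix (Fin n) (Fin n) K[X]) (d : Fin n → ℕ)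
    (h : ∀ i j, (B i j).natDegree ≤ d i) :
    B.det.coeff (∑ i, d i) = (Matrix.of fun i j => (B i j).coeff (d i)).det := by
  rw [Matrix.det_apply', Matrix.det_apply', Polynomial.finset_sum_coeff]
  refine Finset.sum_congr rfl fun σ _ => ?_
  rw [Polynomial.coeff_intCast_mul]
  congr 1
  calc (∏ i, B (σ i) i).coeff (∑ i, d i)
      = (∏ i, B (σ i) i).coeff (∑ i, d (σ i)) := by rw [Equiv.sum_comp σ d]
    _ = ∏ i, (B (σ i) i).coeff (d (σ i)) :=
        coeff_prod_deg _ _ _ fun i _ => h (σ i) i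
    _ = ∏ i, (Matrix.of fun i j => (B i j).coeff (d i)) (σ i) i := rfl

/-- If `A` is a nonsingular row-reduced matrix over `K[x]`, then `adj(A)ᵀ` is row reduced,
and its `i`-th row has degree exactly `η - η_i` where `η_i` are the row degrees of `A`
and `η` their sum. -/
theorem stmt0 {K : Type*} [Field K] {n : ℕ} (A : Matrix (Fin n) (Fin n) K[X])
    (hA : A.det ≠ 0) (hred : (leadingMatrix A).det ≠ 0) :
    (leadingMatrix (A.adjugate)ᵀ).det ≠ 0 ∧
      ∀ i, rowDegNat (A.adjugate)ᵀ i = (∑ j, rowDegNat A j) - rowDegNat A i := by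
  set η : Fin n → ℕ := rowDegNat A with hη
  set s : ℕ := ∑ j, η j with hs
  have hηA : ∀ i j, (A i j).natDegree ≤ η i := fun i j =>
    Finset.le_sup (f := fun k => (A i k).natDegree) (Finset.mem_univ j)
  have hηs : ∀ i, η i ≤ s := fun i =>
    Finset.single_le_sum (fun j _ => Nat.zero_le (η j)) (Finset.mem_univ i)
  -- row degree bounds for the update matrix
  have key : ∀ i j : Fin n,
      ((A.adjugate)ᵀ i j).natDegree ≤ s - η i ∧
      ((A.adjugate)ᵀ i j).coeff (s - η i) = (leadingMatrix A).adjugate j i := by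
    intro i j
    have hentry : (A.adjugate)ᵀ i j = (A.updateRow i (Pi.single j 1)).det := by
      rw [Matrix.transpose_apply, Matrix.adjugate_apply]
    set d : Fin n → ℕ := fun k => if k = i then 0 else η k with hd
    have hsum : ∑ k, d k = s - η i := by
      have : ∑ k, d k + η i = s := by
        rw [hs]
        have h2 : (∑ k, if k = i then η k else (0:ℕ)) = η i := by simp
        rw [← h2, ← Finset.sum_add_distrib]
        refine Finset.sum_congr rfl fun k _ => ?_
        by_cases hk : k = i <;> simp [hd, hk]
      omega
    have hb : ∀ k l, ((A.updateRow i (Pi.single j 1)) k l).natDegree ≤ d k := by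
      intro k l
      by_cases hk : k = i
      · subst hk
        rw [Matrix.updateRow_self]
        by_cases hl : l = j
        · subst hl; simp [hd]
        · simp [hd, Pi.single_eq_of_ne hl]
      · rw [Matrix.updateRow_ne hk]
        simpa [hd, hk] using hηA k l
    have hmat : (Matrix.of fun k l => ((A.updateRow i (Pi.single j 1)) k l).coeff (d k))
        = (leadingMatrix A).updateRow i (Pi.single j 1) := by
      ext k l
      by_cases hk : k = i
      · subst hk
        rw [Matrix.of_apply, Matrix.updateRow_self, Matrix.updateRow_self]
        by_cases hl : l = j
        · subst hl; simp [hd]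
        · simp [hd, Pi.single_eq_of_ne hl]
      · rw [Matrix.of_apply, Matrix.updateRow_ne hk, Matrix.updateRow_ne hk]
        simp [hd, hk, leadingMatrix, hη]
    constructor
    · rw [hentry, ← hsum]; exact natDegree_det_le _ _ hb
    · rw [hentry, ← hsum, coeff_det _ _ hb, hmat, ← Matrix.adjugate_apply]
  have hadjLM : (leadingMatrix A).adjugate.det ≠ 0 := by
    rw [Matrix.det_adjugate]
    exact pow_ne_zero _ hred
  -- for each i there is j with adjugate (LM A) j i ≠ 0
  have hcol : ∀ i : Fin n, ∃ j, (leadingMatrix A).adjugate j i ≠ 0 := by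
    intro i
    by_contra hcon
    push_neg at hcon
    exact hadjLM (Matrix.det_eq_zero_of_column_eq_zero i hcon)
  have hrowdeg : ∀ i, rowDegNat (A.adjugate)ᵀ i = s - η i := by
    intro i
    apply le_antisymm
    · exact Finset.sup_le fun j _ => (key i j).1
    · obtain ⟨j, hj⟩ := hcol i
      have : s - η i ≤ ((A.adjugate)ᵀ i j).natDegree := by
        apply Polynomial.le_natDegree_of_ne_zero
        rw [(key i j).2]; exact hj
      exact this.trans (Finset.le_sup
        (f := fun k => ((A.adjugate)ᵀ i k).natDegree) (Finset.mem_univ j))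
  refine ⟨?_, hrowdeg⟩
  have hLM : leadingMatrix (A.adjugate)ᵀ = ((leadingMatrix A).adjugate)ᵀ := by
    ext i j
    rw [leadingMatrix, Matrix.of_apply, hrowdeg i, (key i j).2, Matrix.transpose_apply]
  rw [hLM, Matrix.det_transpose]
  exact hadjLM
end

section
/- Let R be an n×m matrix over K[x] that is row reduced with rows of degrees d_1,...,d_n. Then for any nonzero vector v = (v_1,...,v_n) over K[x], the degree of the row vector v·R equals max over i with v_i ≠ 0 of (deg v_i + d_i). (Predictable degree property.) -/
open Polynomial Matrix Classical

noncomputable section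

/-- Predictable degree property: if `R` is row reduced (rows of its leading matrix are
linearly independent over `K`, hence `R` has full row rank), then for any nonzero vector
`v`, the degree of `v·R` is `max_{i : v_i ≠ 0} (deg v_i + d_i)` where `d_i` is the degree
of row `i` of `R`. -/
theorem stmt2 {K : Type*} [Field K] {n m : ℕ} (R : Matrix (Fin n) (Fin m) K[X])
    (hred : LinearIndependent K (fun i => leadingMatrix R i))
    (v : Fin n → K[X]) (hv : v ≠ 0) :
    (Finset.univ.sup fun j => ((v ᵥ* R) j).degree) =
      (Finset.univ.filter fun i => v i ≠ 0).sup
        (fun i => (((v i).natDegree + rowDegNat R i : ℕ) : WithBot ℕ)) := by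
  classical
  set d : Fin n → ℕ := rowDegNat R with hd
  set S : Finset (Fin n) := Finset.univ.filter fun i => v i ≠ 0 with hS
  have hSne : S.Nonempty := by
    obtain ⟨i, hi⟩ := Function.ne_iff.mp hv
    refine ⟨i, ?_⟩
    simp only [hS, Finset.mem_filter, Finset.mem_univ, true_and]
    simpa using hi
  set D : ℕ := S.sup (fun i => (v i).natDegree + d i) with hD
  have hRHS : (S.sup fun i => (((v i).natDegree + d i : ℕ) : WithBot ℕ)) = (D : WithBot ℕ) := by
    rw [hD]
    simp only [Nat.cast_withBot]
    exact (Finset.coe_sup_of_nonempty hSne _).symm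
  rw [hRHS]
  -- degree bound for each entry of R
  have hRdeg : ∀ i j, (R i j).natDegree ≤ d i := fun i j =>
    Finset.le_sup (f := fun j => (R i j).natDegree) (Finset.mem_univ j)
  apply le_antisymm
  · -- upper bound
    apply Finset.sup_le
    intro j _
    have : (v ᵥ* R) j = ∑ i, v i * R i j := rfl
    rw [this]
    refine (Polynomial.degree_sum_le _ _).trans ?_
    apply Finset.sup_le
    intro i _
    by_cases hvi : v i = 0
    · simp [hvi]
    · refine (Polynomial.degree_mul_le _ _).trans ?_
      have h1 : (v i).degree ≤ ((v i).natDegree : WithBot ℕ) := Polynomial.degree_le_natDegree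
      have h2 : (R i j).degree ≤ (d i : WithBot ℕ) :=
        Polynomial.degree_le_natDegree.trans (by exact_mod_cast Nat.cast_le.mpr (hRdeg i j))
      calc (v i).degree + (R i j).degree ≤ ((v i).natDegree : WithBot ℕ) + (d i : WithBot ℕ) :=
            add_le_add h1 h2
        _ = (((v i).natDegree + d i : ℕ) : WithBot ℕ) := by push_cast; ring
        _ ≤ (D : WithBot ℕ) := by
            exact_mod_cast Nat.cast_le.mpr (Finset.le_sup (f := fun i => (v i).natDegree + d i)
              (by simp [hS, hvi]))
  · -- lower bound
    -- leading coefficient vector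
    set c : Fin n → K := fun i => if (v i).natDegree + d i = D then (v i).leadingCoeff else 0
      with hc
    have hDle : ∀ i, v i ≠ 0 → (v i).natDegree + d i ≤ D := fun i hi =>
      Finset.le_sup (f := fun i => (v i).natDegree + d i) (by simp [hS, hi])
    have hcoeff : ∀ j, ((v ᵥ* R) j).coeff D = ∑ i, c i * leadingMatrix R i j := by
      intro j
      have : (v ᵥ* R) j = ∑ i, v i * R i j := rfl
      rw [this, Polynomial.finset_sum_coeff]
      apply Finset.sum_congr rfl
      intro i _
      by_cases hvi : v i = 0
      · have hci : c i = 0 := by simp [hc, hvi]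
        rw [hci, hvi, zero_mul, zero_mul, Polynomial.coeff_zero]
      by_cases hiD : (v i).natDegree + d i = D
      · rw [← hiD, Polynomial.coeff_mul_add_eq_of_natDegree_le le_rfl (hRdeg i j)]
        have hci : c i = (v i).leadingCoeff := by rw [hc]; exact if_pos hiD
        rw [hci]
        rfl
      · have hlt : ((v i).natDegree + d i : ℕ) < D := lt_of_le_of_ne (hDle i hvi) hiD
        have hle : (v i * R i j).degree ≤ (((v i).natDegree + d i : ℕ) : WithBot ℕ) := by
          refine (Polynomial.degree_mul_le _ _).trans ?_
          rw [Nat.cast_add]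
          exact add_le_add Polynomial.degree_le_natDegree
            (Polynomial.degree_le_natDegree.trans (by exact_mod_cast hRdeg i j))
        have hdeglt : (v i * R i j).degree < (D : WithBot ℕ) :=
          lt_of_le_of_lt hle (by exact_mod_cast hlt)
        have hci : c i = 0 := by rw [hc]; exact if_neg hiD
        rw [Polynomial.coeff_eq_zero_of_degree_lt hdeglt, hci, zero_mul]
    -- c is nonzero
    obtain ⟨i₀, hi₀S, hi₀⟩ := Finset.exists_mem_eq_sup S hSne (fun i => (v i).natDegree + d i)
    have hvi₀ : v i₀ ≠ 0 := (Finset.mem_filter.mp hi₀S).2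
    have hci₀ : c i₀ ≠ 0 := by
      rw [hc]; simp only [hi₀.symm, ← hD, eq_self_iff_true, if_true]
      exact Polynomial.leadingCoeff_ne_zero.mpr hvi₀
    -- by linear independence, some entry of c ᵥ* LM is nonzero
    have hcomb : ∃ j, (∑ i, c i * leadingMatrix R i j) ≠ 0 := by
      by_contra h
      push_neg at h
      have : ∑ i, c i • leadingMatrix R i = 0 := by
        funext j
        simpa [Finset.sum_apply] using h j
      have := (Fintype.linearIndependent_iff.mp hred) c this i₀
      exact hci₀ this
    obtain ⟨j, hj⟩ := hcomb
    have hne : ((v ᵥ* R) j).coeff D ≠ 0 := by rw [hcoeff j]; exact hj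
    calc (D : WithBot ℕ) ≤ ((v ᵥ* R) j).degree := Polynomial.le_degree_of_ne_zero hne
      _ ≤ _ := Finset.le_sup (f := fun j => ((v ᵥ* R) j).degree) (Finset.mem_univ j)
end
end

section
/- Let d ≥ 0 and B̂ the (n+1)×(n+1) matrix over K[x] with first column (1, S_1,...,S_n)^T, x^d·I_n in the lower-right block, and zeros in the remainder of the first row. Let Â^T be the transpose of the matrix Â with first row (x^d, -S_1,...,-S_n) and identity lower-right block. Then the K[x]-row space of Â^T is exactly the set of order-d approximants of B̂, i.e. every vector p ∈ K[x]^{1×(n+1)} with p·B̂ ≡ 0 (mod x^d) is a K[x]-linear combination of the rows of Â^T, and conversely. -/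
open Polynomial Matrix

/-- `Â`: first row `(x^d, -S_1, ..., -S_n)`, identity in the lower-right block. -/
noncomputable def Ahat {K : Type*} [Field K] {n : ℕ} (d : ℕ) (S : Fin n → K[X]) :
    Matrix (Fin (n + 1)) (Fin (n + 1)) K[X] :=
  Matrix.of (Fin.cons (Fin.cons ((X : K[X]) ^ d) (fun j => -S j))
    (fun i => Fin.cons 0 (fun j => if i = j then (1 : K[X]) else 0)))

/-- `B̂`: first column `(1, S_1, ..., S_n)ᵀ`, `x^d·I_n` in the lower-right block,
zeros elsewhere in the first row. -/
noncomputable def Bhat {K : Type*} [Field K] {n : ℕ} (d : ℕ) (S : Fin n → K[X]) :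
    Matrix (Fin (n + 1)) (Fin (n + 1)) K[X] :=
  Matrix.of (Fin.cons (Fin.cons 1 (fun _ => 0))
    (fun i => Fin.cons (S i) (fun j => if i = j then (X : K[X]) ^ d else 0)))


lemma vB0 {K : Type*} [Field K] {n : ℕ} (d : ℕ) (S : Fin n → K[X]) (p : Fin (n+1) → K[X]) :
    (p ᵥ* Bhat d S) 0 = p 0 + ∑ k, p k.succ * S k := by
  simp [Bhat, Matrix.vecMul, dotProduct, Fin.sum_univ_succ]

lemma vBs {K : Type*} [Field K] {n : ℕ} (d : ℕ) (S : Fin n → K[X]) (p : Fin (n+1) → K[X])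
    (j : Fin n) : (p ᵥ* Bhat d S) j.succ = p j.succ * X ^ d := by
  simp [Bhat, Matrix.vecMul, dotProduct, Fin.sum_univ_succ, mul_ite]

lemma vA0 {K : Type*} [Field K] {n : ℕ} (d : ℕ) (S : Fin n → K[X]) (u : Fin (n+1) → K[X]) :
    (u ᵥ* (Ahat d S)ᵀ) 0 = u 0 * X ^ d - ∑ k, u k.succ * S k := by
  simp [Ahat, Matrix.vecMul, dotProduct, Fin.sum_univ_succ, sub_eq_add_neg,
    Finset.sum_neg_distrib]

lemma vAs {K : Type*} [Field K] {n : ℕ} (d : ℕ) (S : Fin n → K[X]) (u : Fin (n+1) → K[X])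
    (j : Fin n) : (u ᵥ* (Ahat d S)ᵀ) j.succ = u j.succ := by
  simp [Ahat, Matrix.vecMul, dotProduct, Fin.sum_univ_succ, mul_ite]

/-- The `K[x]`-row space of `Âᵀ` is exactly the set of order-`d` approximants of `B̂`. -/
theorem stmt5 {K : Type*} [Field K] {n : ℕ} (d : ℕ) (S : Fin n → K[X]) :
    ∀ p : Fin (n + 1) → K[X],
      (∀ j, (X : K[X]) ^ d ∣ (p ᵥ* Bhat d S) j) ↔
      (∃ u : Fin (n + 1) → K[X], p = u ᵥ* (Ahat d S)ᵀ) := by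
  intro p
  constructor
  · intro h
    obtain ⟨c, hc⟩ := h 0
    rw [vB0] at hc
    refine ⟨Fin.cons c (fun k => p k.succ), ?_⟩
    funext i
    refine Fin.cases ?_ ?_ i
    · rw [vA0]
      simp only [Fin.cons_zero, Fin.cons_succ]
      have : p 0 = X ^ d * c - ∑ k, p k.succ * S k := by linear_combination hc
      rw [this]; ring
    · intro j
      rw [vAs]; simp
  · rintro ⟨u, rfl⟩
    intro j
    refine Fin.cases ?_ ?_ j
    · rw [vB0, vA0]
      simp only [vAs]
      exact ⟨u 0, by ring⟩
    · intro k
      rw [vBs]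
      exact ⟨(u ᵥ* (Ahat d S)ᵀ) k.succ, mul_comm _ _⟩
end

section
/- Let G be an approximant basis of order d of a matrix A ∈ K[x]^{n×m} of degree at most d, computed such that the set of order-d approximants of A equals the K[x]-row space of G. Then det(G) = c·x^D for some nonzero constant c ∈ K and some integer D with 0 ≤ D ≤ m·d. -/
open Polynomial Matrix

set_option maxHeartbeats 1500000 in
/-- If `G` is an order-`d` approximant basis of `A ∈ K[x]^{n×m}` of degree at most `d`
(nonsingular, and its row space equals the module of order-`d` approximants of `A`),
then `det G = c·x^D` for a nonzero constant `c` and some `D ≤ m·d`. -/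
theorem stmt6 {K : Type*} [Field K] {n m d : ℕ}
    (A : Matrix (Fin n) (Fin m) K[X]) (hdegA : ∀ i j, (A i j).degree ≤ (d : WithBot ℕ))
    (G : Matrix (Fin n) (Fin n) K[X]) (hG : G.det ≠ 0)
    (hspan : ∀ p : Fin n → K[X],
      (∃ u : Fin n → K[X], p = u ᵥ* G) ↔ ∀ j, (X : K[X]) ^ d ∣ (p ᵥ* A) j) :
    ∃ (c : K) (D : ℕ), c ≠ 0 ∧ D ≤ m * d ∧ G.det = C c * X ^ D := by
  classical
  have hXd : (X : K[X]) ^ d ≠ 0 := pow_ne_zero _ X_ne_zero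
  -- every entry of G * A is divisible by X^d
  have hdvd : ∀ i j, (X : K[X]) ^ d ∣ (G * A) i j := by
    intro i j
    have h := (hspan (G i)).mp ⟨Pi.single i 1, (Matrix.single_one_vecMul i G).symm⟩ j
    simpa [Matrix.mul_apply, Matrix.vecMul, dotProduct] using h
  choose B hB using hdvd
  set N : Matrix (Fin n) (Fin n ⊕ Fin m) K[X] := fromCols G (-Matrix.of B) with hN
  set Cm : Matrix (Fin n ⊕ Fin m) (Fin m) K[X] := fromRows A ((X : K[X]) ^ d • 1) with hCm
  have hNC : N * Cm = 0 := by
    rw [hN, hCm, fromCols_mul_fromRows]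
    ext i j
    simp [Matrix.mul_apply, Matrix.smul_apply, Matrix.one_apply, Finset.mul_sum,
      mul_ite, mul_comm, hB i j]
  -- the row space of N is exactly the left kernel of Cm
  have hker : ∀ v : (Fin n ⊕ Fin m) → K[X], v ᵥ* Cm = 0 ↔ ∃ u, v = u ᵥ* N := by
    intro v
    constructor
    · intro hv
      have hv' : (v ∘ Sum.inl) ᵥ* A + (v ∘ Sum.inr) ᵥ* ((X : K[X]) ^ d • 1) = 0 := by
        rw [← sumElim_vecMul_fromRows, ← hCm]
        rw [show Sum.elim (v ∘ Sum.inl) (v ∘ Sum.inr) = v from funext fun s => by cases s <;> rfl]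
        exact hv
      have hsm : (v ∘ Sum.inr) ᵥ* ((X : K[X]) ^ d • 1) = fun j => (X : K[X]) ^ d * v (Sum.inr j) := by
        funext j
        simp [Matrix.vecMul, dotProduct, Matrix.smul_apply, Matrix.one_apply, mul_ite,
          mul_comm, Finset.sum_ite_eq']
      rw [hsm] at hv'
      have hv2 : ∀ j, ((v ∘ Sum.inl) ᵥ* A) j = -((X : K[X]) ^ d * v (Sum.inr j)) := by
        intro j
        have h := congrFun hv' j
        simp only [Pi.add_apply, Pi.zero_apply] at h
        linear_combination h
      obtain ⟨u, hu⟩ := (hspan (v ∘ Sum.inl)).mpr (fun j => ⟨-(v (Sum.inr j)), by rw [hv2 j]; ring⟩)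
      refine ⟨u, funext fun s => ?_⟩
      cases s with
      | inl i =>
        have := congrFun hu i
        simpa [hN, Matrix.vecMul_fromCols] using this
      | inr j =>
        have h1 : ((v ∘ Sum.inl) ᵥ* A) j = (u ᵥ* (G * A)) j := by
          rw [hu, ← Matrix.vecMul_vecMul]
        have h2 : (u ᵥ* (G * A)) j = (X : K[X]) ^ d * (u ᵥ* Matrix.of B) j := by
          simp only [Matrix.vecMul, dotProduct, Matrix.of_apply]
          rw [Finset.mul_sum]
          exact Finset.sum_congr rfl fun i _ => by rw [hB i j]; ring
        have h3 : (X : K[X]) ^ d * v (Sum.inr j) = (X : K[X]) ^ d * (-(u ᵥ* Matrix.of B) j) := by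
          have := hv2 j
          rw [h1, h2] at this
          linear_combination this
        have h4 := mul_left_cancel₀ hXd h3
        rw [h4]
        simp [hN, Matrix.vecMul_fromCols, Matrix.vecMul, dotProduct, mul_neg,
          Finset.sum_neg_distrib]
    · rintro ⟨u, rfl⟩
      rw [Matrix.vecMul_vecMul, hNC, Matrix.vecMul_zero]
  set Mker : Submodule K[X] ((Fin n ⊕ Fin m) → K[X]) := LinearMap.ker Cm.vecMulLinear with hMker
  have hmem : ∀ v, v ∈ Mker ↔ ∃ u, v = u ᵥ* N := by
    intro v
    rw [hMker, LinearMap.mem_ker, Matrix.vecMulLinear_apply]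
    exact hker v
  have hNmem : ∀ i, (N i) ∈ Mker := by
    intro i
    rw [hmem]
    exact ⟨Pi.single i 1, (Matrix.single_one_vecMul i N).symm⟩
  -- the quotient is finite and torsion-free, hence free
  haveI hQtf : NoZeroSMulDivisors K[X] (((Fin n ⊕ Fin m) → K[X]) ⧸ Mker) := by
    refine ⟨fun {c} {q} h => ?_⟩
    by_cases hc : c = 0
    · exact Or.inl hc
    · right
      obtain ⟨v0, rfl⟩ := Mker.mkQ_surjective q
      rw [← _root_.map_smul, Submodule.mkQ_apply, Submodule.Quotient.mk_eq_zero] at h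
      rw [Submodule.mkQ_apply, Submodule.Quotient.mk_eq_zero]
      rw [hMker, LinearMap.mem_ker, Matrix.vecMulLinear_apply] at h ⊢
      rw [Matrix.smul_vecMul] at h
      rcases smul_eq_zero.mp h with h' | h'
      · exact absurd h' hc
      · exact h'
  haveI hQfree : Module.Free K[X] (((Fin n ⊕ Fin m) → K[X]) ⧸ Mker) :=
    Module.free_of_finite_type_torsion_free'
  obtain ⟨s, hs⟩ := Module.projective_lifting_property Mker.mkQ LinearMap.id Mker.mkQ_surjective
  have hsect : ∀ q, Mker.mkQ (s q) = q := fun q => by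
    have := LinearMap.congr_fun hs q; simpa using this
  set κ := Module.Free.ChooseBasisIndex K[X] (((Fin n ⊕ Fin m) → K[X]) ⧸ Mker) with hκ
  set bQ : Module.Basis κ K[X] (((Fin n ⊕ Fin m) → K[X]) ⧸ Mker) := Module.Free.chooseBasis _ _ with hbQ
  set w : Fin n ⊕ κ → ((Fin n ⊕ Fin m) → K[X]) :=
    Sum.elim (fun i => N i) (fun k => s (bQ k)) with hw
  have hindep : LinearIndependent K[X] w := by
    rw [Fintype.linearIndependent_iff]
    intro g hg
    have hsplit : ∑ i : Fin n, g (Sum.inl i) • N i + ∑ k : κ, g (Sum.inr k) • s (bQ k) = 0 := by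
      have h0 := hg
      rw [Fintype.sum_sum_type] at h0
      simpa [hw] using h0
    have hq : ∑ k : κ, g (Sum.inr k) • bQ k = 0 := by
      have h0 := congrArg Mker.mkQ hsplit
      have hz : ∀ i : Fin n, Mker.mkQ (N i) = 0 := fun i => by
        rw [Submodule.mkQ_apply, Submodule.Quotient.mk_eq_zero]; exact hNmem i
      simpa [map_add, map_sum, _root_.map_smul, hsect, hz] using h0
    have hzr : ∀ k, g (Sum.inr k) = 0 :=
      Fintype.linearIndependent_iff.mp bQ.linearIndependent _ hq
    have hl : ∑ i : Fin n, g (Sum.inl i) • N i = 0 := by simpa [hzr] using hsplit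
    have hlv : (fun i => g (Sum.inl i)) ᵥ* N = 0 := by
      funext j
      have := congrFun hl j
      simpa [Matrix.vecMul, dotProduct, Finset.sum_apply] using this
    have hlG : (fun i => g (Sum.inl i)) ᵥ* G = 0 := by
      funext i
      have := congrFun hlv (Sum.inl i)
      simpa [hN, Matrix.vecMul_fromCols] using this
    have hz2 : ∀ i, g (Sum.inl i) = 0 := by
      have h3 := congrArg (fun vv => vv ᵥ* G.adjugate) hlG
      simp only [Matrix.vecMul_vecMul, Matrix.mul_adjugate, Matrix.zero_vecMul] at h3
      intro i
      have h4 := congrFun h3 i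
      simpa [Matrix.vecMul, dotProduct, Matrix.smul_apply, Matrix.one_apply, mul_ite,
        Finset.sum_ite_eq', mul_comm, mul_eq_zero, hG] using h4
    intro i
    cases i with
    | inl i => exact hz2 i
    | inr k => exact hzr k
  have hwspan : ⊤ ≤ Submodule.span K[X] (Set.range w) := by
    intro v _
    have hsub1 : Mker ≤ Submodule.span K[X] (Set.range w) := by
      intro x hx
      obtain ⟨u, rfl⟩ := (hmem x).mp hx
      have hrepr : u ᵥ* N = ∑ i, u i • N i := by
        funext j
        simp [Matrix.vecMul, dotProduct, Finset.sum_apply]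
      rw [hrepr]
      exact Submodule.sum_mem _ fun i _ => Submodule.smul_mem _ _
        (Submodule.subset_span ⟨Sum.inl i, rfl⟩)
    have hv1 : v - s (Mker.mkQ v) ∈ Mker := by
      have h0 : Mker.mkQ (v - s (Mker.mkQ v)) = 0 := by rw [map_sub, hsect, sub_self]
      rw [Submodule.mkQ_apply, Submodule.Quotient.mk_eq_zero] at h0
      exact h0
    have hv2 : s (Mker.mkQ v) ∈ Submodule.span K[X] (Set.range w) := by
      have h5 : Mker.mkQ v ∈ Submodule.span K[X] (Set.range bQ) := by rw [bQ.span_eq]; trivial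
      have h6 : s (Mker.mkQ v) ∈ Submodule.map s (Submodule.span K[X] (Set.range bQ)) :=
        Submodule.mem_map_of_mem h5
      rw [Submodule.map_span] at h6
      refine Submodule.span_mono ?_ h6
      rintro _ ⟨_, ⟨k, rfl⟩, rfl⟩
      exact ⟨Sum.inr k, rfl⟩
    have := Submodule.add_mem _ (hsub1 hv1) hv2
    simpa using this
  set basW : Module.Basis (Fin n ⊕ κ) K[X] ((Fin n ⊕ Fin m) → K[X]) := Module.Basis.mk hindep hwspan with hbasW
  have hcard : Fintype.card κ = m := by
    have e := basW.indexEquiv (Pi.basisFun K[X] (Fin n ⊕ Fin m))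
    have hc := Fintype.card_congr e
    rw [Fintype.card_sum, Fintype.card_sum, Fintype.card_fin, Fintype.card_fin] at hc
    omega
  set eκ : κ ≃ Fin m := Fintype.equivFinOfCardEq hcard with heκ
  set basW' : Module.Basis (Fin n ⊕ Fin m) K[X] ((Fin n ⊕ Fin m) → K[X]) :=
    basW.reindex ((Equiv.refl (Fin n)).sumCongr eκ) with hbasW'
  set W : Matrix (Fin n ⊕ Fin m) (Fin n ⊕ Fin m) K[X] := Matrix.of (fun i j => basW' i j)
    with hWdef
  have hWunit : IsUnit W.det := by
    have hWT : W = ((Pi.basisFun K[X] (Fin n ⊕ Fin m)).toMatrix basW')ᵀ := by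
      ext i j
      simp [hWdef, Module.Basis.toMatrix_apply]
    rw [hWT, Matrix.det_transpose]
    have := (Pi.basisFun K[X] (Fin n ⊕ Fin m)).invertibleToMatrix basW'
    exact Matrix.isUnit_det_of_invertible _
  have hWrow : ∀ i : Fin n, W (Sum.inl i) = N i := by
    intro i
    funext j
    show basW' (Sum.inl i) j = N i j
    rw [hbasW', Module.Basis.reindex_apply]
    have h0 : ((Equiv.refl (Fin n)).sumCongr eκ).symm (Sum.inl i) = Sum.inl i := rfl
    rw [h0, hbasW, Module.Basis.mk_apply]
    rfl
  set Y : Matrix (Fin n ⊕ Fin m) (Fin n ⊕ Fin m) K[X] :=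
    fromBlocks 1 A 0 ((X : K[X]) ^ d • 1) with hY
  have hYdet : Y.det = X ^ (m * d) := by
    rw [hY, Matrix.det_fromBlocks_zero₂₁, Matrix.det_one, one_mul, Matrix.det_smul,
      Matrix.det_one, mul_one, Fintype.card_fin, ← pow_mul, mul_comm d m]
  have hrowY : ∀ i : Fin n, (W * Y) (Sum.inl i) = Sum.elim (G i) 0 := by
    intro i
    funext jj
    have hWYij : (W * Y) (Sum.inl i) jj = ((N i) ᵥ* Y) jj := by
      rw [Matrix.mul_apply, Matrix.vecMul, dotProduct]
      exact Finset.sum_congr rfl fun k _ => by rw [hWrow i]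
    rw [hWYij]
    cases jj with
    | inl j =>
      simp [hY, hN, Matrix.vecMul, dotProduct, Fintype.sum_sum_type,
        Matrix.fromCols, Matrix.one_apply, mul_ite, Finset.sum_ite_eq']
    | inr j =>
      have hGA : ∑ k, G i k * A k j = X ^ d * B i j := by
        rw [← Matrix.mul_apply]
        exact hB i j
      simp [hY, hN, Matrix.vecMul, dotProduct, Fintype.sum_sum_type,
        Matrix.fromCols, Matrix.one_apply, Matrix.smul_apply, mul_ite,
        Finset.sum_ite_eq']
      linear_combination hGA
  have h11 : (W * Y).toBlocks₁₁ = G := by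
    refine Matrix.ext fun i j => ?_
    simpa [Matrix.toBlocks₁₁] using congrFun (hrowY i) (Sum.inl j)
  have h12 : (W * Y).toBlocks₁₂ = 0 := by
    refine Matrix.ext fun i j => ?_
    simpa [Matrix.toBlocks₁₂] using congrFun (hrowY i) (Sum.inr j)
  have hdet2 : W.det * X ^ (m * d) = G.det * ((W * Y).toBlocks₂₂).det := by
    rw [← hYdet, ← Matrix.det_mul]
    conv_lhs => rw [← Matrix.fromBlocks_toBlocks (W * Y)]
    rw [h11, h12, Matrix.det_fromBlocks_zero₁₂]
  obtain ⟨uu, huu⟩ := hWunit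
  have hdvdfin : G.det ∣ X ^ (m * d) := by
    refine ⟨((W * Y).toBlocks₂₂).det * (↑uu⁻¹ : K[X]), ?_⟩
    have h7 : (↑uu : K[X]) * ↑uu⁻¹ = 1 := uu.mul_inv
    calc X ^ (m * d) = X ^ (m * d) * ((↑uu : K[X]) * ↑uu⁻¹) := by rw [h7, mul_one]
      _ = (W.det * X ^ (m * d)) * ↑uu⁻¹ := by rw [huu]; ring
      _ = (G.det * ((W * Y).toBlocks₂₂).det) * ↑uu⁻¹ := by rw [hdet2]
      _ = G.det * (((W * Y).toBlocks₂₂).det * ↑uu⁻¹) := by ring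
  obtain ⟨D, hDle, hassoc⟩ := (dvd_prime_pow Polynomial.prime_X (m * d)).mp hdvdfin
  obtain ⟨vu, hvu⟩ := hassoc.symm
  obtain ⟨c, hcunit, hcv⟩ := Polynomial.isUnit_iff.mp vu.isUnit
  refine ⟨c, D, isUnit_iff_ne_zero.mp hcunit, hDle, ?_⟩
  rw [← hvu, ← hcv]
  ring
end

section
/- Let A = [A_1 | A_2] be a block column decomposition of A ∈ K[x]^{n×m}. If F_1 ∈ K[x]^{n×n} is an approximant basis of order d for A_1 (its row space equals the module of order-d approximants of A_1), and F_2 ∈ K[x]^{n×n} is an approximant basis of order d for F_1·A_2, then F_2·F_1 is an approximant basis of order d for A, i.e. the row space of F_2·F_1 equals the module of all p with p·A ≡ 0 mod x^d. -/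
open Polynomial Matrix

/-- Recursive computation of approximant bases: if `F₁` is an order-`d` approximant basis
of `A₁` and `F₂` is an order-`d` approximant basis of `F₁·A₂`, then `F₂·F₁` is an order-`d`
approximant basis of `A = [A₁ | A₂]`, i.e. its row space is exactly the module of vectors
`p` with `p·A₁ ≡ 0` and `p·A₂ ≡ 0 (mod x^d)`. -/
theorem stmt7 {K : Type*} [Field K] {n m₁ m₂ d : ℕ}
    (A₁ : Matrix (Fin n) (Fin m₁) K[X]) (A₂ : Matrix (Fin n) (Fin m₂) K[X])
    (F₁ F₂ : Matrix (Fin n) (Fin n) K[X])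
    (hF₁ : F₁.det ≠ 0)
    (hF₁span : ∀ p : Fin n → K[X],
      (∃ u : Fin n → K[X], p = u ᵥ* F₁) ↔ ∀ j, (X : K[X]) ^ d ∣ (p ᵥ* A₁) j)
    (hF₂ : F₂.det ≠ 0)
    (hF₂span : ∀ p : Fin n → K[X],
      (∃ u : Fin n → K[X], p = u ᵥ* F₂) ↔ ∀ j, (X : K[X]) ^ d ∣ (p ᵥ* (F₁ * A₂)) j) :
    (F₂ * F₁).det ≠ 0 ∧
    ∀ p : Fin n → K[X],
      (∃ u : Fin n → K[X], p = u ᵥ* (F₂ * F₁)) ↔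
        ((∀ j, (X : K[X]) ^ d ∣ (p ᵥ* A₁) j) ∧ (∀ j, (X : K[X]) ^ d ∣ (p ᵥ* A₂) j)) := by
  constructor
  · rw [Matrix.det_mul]
    exact mul_ne_zero hF₂ hF₁
  · intro p
    constructor
    · rintro ⟨u, rfl⟩
      rw [← Matrix.vecMul_vecMul]
      constructor
      · exact (hF₁span _).mp ⟨u ᵥ* F₂, rfl⟩
      · intro j
        have := (hF₂span (u ᵥ* F₂)).mp ⟨u, rfl⟩ j
        rwa [Matrix.vecMul_vecMul, ← Matrix.mul_assoc, ← Matrix.vecMul_vecMul,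
          ← Matrix.vecMul_vecMul] at this
    · rintro ⟨h1, h2⟩
      obtain ⟨v, rfl⟩ := (hF₁span p).mpr h1
      have : ∀ j, (X : K[X]) ^ d ∣ (v ᵥ* (F₁ * A₂)) j := by
        intro j
        have := h2 j
        rwa [Matrix.vecMul_vecMul] at this
      obtain ⟨u, rfl⟩ := (hF₂span v).mpr this
      exact ⟨u, by rw [← Matrix.vecMul_vecMul]⟩
end

section
/- With the hypotheses of the previous setting (deg S_i < deg g_i, N_i ≤ deg g_i, 1 ≤ N_0, d = N_0 + max_i deg g_i - 1), a vector (λ, φ_1,...,φ_n) with deg λ < N_0 and deg φ_i < N_i satisfies λ·S_i ≡ φ_i (mod g_i) for all i if and only if there exist q_1,...,q_n ∈ K[x] with deg q_i ≤ N_0 - 2 such that the extended vector (λ, φ_1,...,φ_n, q_1,...,q_n) is an order-d approximant of the (2n+1)×n matrix H whose rows are: first row (-S_1,...,-S_n), then the n×n identity, then the diagonal matrix diag(g_1,...,g_n). -/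
open Polynomial Matrix

/-- The matrix `H` with first row `(-S_1,...,-S_n)`, then the identity, then
`diag(g_1,...,g_n)`. -/
noncomputable def Hmat {K : Type*} [Field K] {n : ℕ} (S g : Fin n → K[X]) :
    Matrix (Unit ⊕ Fin n ⊕ Fin n) (Fin n) K[X] :=
  Matrix.of (Sum.elim (fun (_ : Unit) j => -S j)
    (Sum.elim (fun i j => if i = j then (1 : K[X]) else 0)
              (fun i j => if i = j then g i else 0)))

lemma entry9 {K : Type*} [Field K] {n : ℕ} (S g : Fin n → K[X]) (lam : K[X]) (φ q : Fin n → K[X]) (j : Fin n) :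
    ((Sum.elim (fun _ : Unit => lam) (Sum.elim φ q)) ᵥ* Hmat S g) j
      = φ j - lam * S j + q j * g j := by
  simp [Matrix.vecMul, dotProduct, Hmat, Fintype.sum_sum_type, mul_ite,
    Finset.sum_ite_eq', mul_comm]
  ring

lemma zero_of_dvd9 {K : Type*} [Field K] {p : K[X]} {d : ℕ} (h : (X : K[X]) ^ d ∣ p)
    (hdeg : p.degree < (d : WithBot ℕ)) : p = 0 := by
  by_contra hp
  have := Polynomial.degree_le_of_dvd h hp
  rw [Polynomial.degree_X_pow] at this
  exact absurd hdeg (not_lt.2 this)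

-- key degree bound
lemma keydeg9 {K : Type*} [Field K] {lam S φ g : K[X]} {N0 Ni : ℕ} (hN0 : 1 ≤ N0)
    (hlam : lam.degree < (N0 : WithBot ℕ)) (hS : S.degree < g.degree)
    (hφ : φ.degree < (Ni : WithBot ℕ)) (hNi : Ni ≤ g.natDegree) :
    (lam * S - φ).degree < ((g.natDegree + (N0 - 1) : ℕ) : WithBot ℕ) := by
  have hg : g ≠ 0 := fun h => by simp [h] at hS
  have hg1 : 1 ≤ g.natDegree ∨ S = 0 := by
    rcases eq_or_ne S 0 with h | h
    · exact Or.inr h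
    · left
      have := Polynomial.natDegree_lt_natDegree h hS
      omega
  apply lt_of_le_of_lt (Polynomial.degree_sub_le _ _)
  rw [max_lt_iff]
  constructor
  · rcases eq_or_ne (lam * S) 0 with h | h
    · rw [h, Polynomial.degree_zero]; exact WithBot.bot_lt_coe _
    · have hl : lam ≠ 0 := left_ne_zero_of_mul h
      have hs : S ≠ 0 := right_ne_zero_of_mul h
      have h1 : lam.natDegree < N0 := by
        rwa [Polynomial.natDegree_lt_iff_degree_lt hl]
      have h2 : S.natDegree < g.natDegree := Polynomial.natDegree_lt_natDegree hs hS
      rw [Polynomial.degree_mul, Polynomial.degree_eq_natDegree hl,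
        Polynomial.degree_eq_natDegree hs, ← Nat.cast_add, Nat.cast_lt]
      omega
  · rcases eq_or_ne φ 0 with h | h
    · rw [h, Polynomial.degree_zero]; exact WithBot.bot_lt_coe _
    · have h1 : φ.natDegree < Ni := by rwa [Polynomial.natDegree_lt_iff_degree_lt h]
      rw [Polynomial.degree_eq_natDegree h, Nat.cast_lt]
      omega
/-- A vector `(λ, φ)` with the given degree bounds solves `λ·S_i ≡ φ_i (mod g_i)` for all
`i` if and only if it extends by quotients `q_i` of degree `≤ N₀ - 2` to an order-`d`
approximant of `H`, where `d = N₀ + max_i deg g_i - 1`. -/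
theorem stmt9 {K : Type*} [Field K] {n : ℕ} (S g : Fin n → K[X])
    (hdeg : ∀ i, (S i).degree < (g i).degree)
    (N0 : ℕ) (N : Fin n → ℕ) (hN0 : 1 ≤ N0)
    (hN : ∀ i, N i ≤ (g i).natDegree)
    (d : ℕ) (hd : d = N0 + (Finset.univ.sup fun i => (g i).natDegree) - 1)
    (lam : K[X]) (φ : Fin n → K[X])
    (hlam : lam.degree < (N0 : WithBot ℕ))
    (hφ : ∀ i, (φ i).degree < (N i : WithBot ℕ)) :
    (∀ i, g i ∣ lam * S i - φ i) ↔
      ∃ q : Fin n → K[X], (∀ i, (q i).degree < ((N0 - 1 : ℕ) : WithBot ℕ)) ∧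
        ∀ j, (X : K[X]) ^ d ∣
          ((Sum.elim (fun _ : Unit => lam) (Sum.elim φ q)) ᵥ* Hmat S g) j := by
  have hg : ∀ i, g i ≠ 0 := fun i h => by simpa [h] using hdeg i
  constructor
  · intro h
    have h' : ∀ i, ∃ c, lam * S i - φ i = g i * c := h
    choose c hq using h'
    refine ⟨c, fun i => ?_, fun j => ?_⟩
    · have hq := hq i
      rcases eq_or_ne (c i) 0 with h0 | h0
      · rw [h0, Polynomial.degree_zero]; exact WithBot.bot_lt_coe _
      · have key := keydeg9 hN0 hlam (hdeg i) (hφ i) (hN i)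
        rw [hq, Polynomial.degree_mul, Polynomial.degree_eq_natDegree (hg i),
          Polynomial.degree_eq_natDegree h0, ← Nat.cast_add, Nat.cast_lt] at key
        rw [Polynomial.degree_eq_natDegree h0, Nat.cast_lt]
        omega
    · rw [entry9]
      have : φ j - lam * S j + c j * g j = 0 := by
        linear_combination -hq j
      rw [this]
      exact dvd_zero _
  · rintro ⟨q, hq, hdvd⟩ i
    set M := Finset.univ.sup fun i => (g i).natDegree with hM
    have hgM : ∀ i, (g i).natDegree ≤ M := fun i =>
      Finset.le_sup (f := fun i => (g i).natDegree) (Finset.mem_univ i)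
    have hdegent : (φ i - lam * S i + q i * g i).degree < (d : WithBot ℕ) := by
      apply lt_of_le_of_lt (Polynomial.degree_add_le _ _)
      rw [max_lt_iff]
      constructor
      · apply lt_of_le_of_lt (Polynomial.degree_sub_le _ _)
        rw [max_lt_iff]
        constructor
        · rcases eq_or_ne (φ i) 0 with h0 | h0
          · rw [h0, Polynomial.degree_zero]; exact WithBot.bot_lt_coe _
          · have h1 : (φ i).natDegree < N i := by
              rw [Polynomial.natDegree_lt_iff_degree_lt h0]; exact hφ i
            rw [Polynomial.degree_eq_natDegree h0, Nat.cast_lt]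
            have := hN i; have := hgM i; omega
        · rcases eq_or_ne (lam * S i) 0 with h0 | h0
          · rw [h0, Polynomial.degree_zero]; exact WithBot.bot_lt_coe _
          · have hl : lam ≠ 0 := left_ne_zero_of_mul h0
            have hs : S i ≠ 0 := right_ne_zero_of_mul h0
            have h1 : lam.natDegree < N0 := by
              rwa [Polynomial.natDegree_lt_iff_degree_lt hl]
            have h2 : (S i).natDegree < (g i).natDegree :=
              Polynomial.natDegree_lt_natDegree hs (hdeg i)
            rw [Polynomial.degree_mul, Polynomial.degree_eq_natDegree hl,
              Polynomial.degree_eq_natDegree hs, ← Nat.cast_add, Nat.cast_lt]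
            have := hgM i; omega
      · rcases eq_or_ne (q i * g i) 0 with h0 | h0
        · rw [h0, Polynomial.degree_zero]; exact WithBot.bot_lt_coe _
        · have hqi : q i ≠ 0 := left_ne_zero_of_mul h0
          have h1 : (q i).natDegree < N0 - 1 := by
            rw [Polynomial.natDegree_lt_iff_degree_lt hqi]; exact hq i
          rw [Polynomial.degree_mul, Polynomial.degree_eq_natDegree hqi,
            Polynomial.degree_eq_natDegree (hg i), ← Nat.cast_add, Nat.cast_lt]
          have := hgM i; omega
    have h0 : φ i - lam * S i + q i * g i = 0 := by
      apply zero_of_dvd9 _ hdegent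
      have := hdvd i
      rwa [entry9] at this
    exact ⟨q i, by linear_combination -h0⟩
end

section
/- Let s = (s_1,...,s_n) ∈ ℤ^n be a shift and A ∈ K[x]^{n×m} a matrix with full row rank that is s-row reduced. Then for every nonzero v = (v_1,...,v_n) ∈ K[x]^{1×n}, the s-degree of v·A equals max over i with v_i ≠ 0 of (deg v_i + rowdeg_s(row i of A)). (Shifted predictable degree property.) -/
open Polynomial Matrix Classical

noncomputable section

/-- Degree of a polynomial as an element of `WithBot ℤ`. -/
def zdeg {K : Type*} [Field K] (p : K[X]) : WithBot ℤ :=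
  p.degree.map fun a : ℕ => (a : ℤ)

/-- The `s`-degree of a row vector `w`: `max_j (deg w_j + s_j)`. -/
def sdeg {K : Type*} [Field K] {m : ℕ} (s : Fin m → ℤ) (w : Fin m → K[X]) : WithBot ℤ :=
  Finset.univ.sup fun j => zdeg (w j) + (s j : WithBot ℤ)

section Aux

variable {K : Type*} [Field K]

lemma zdeg_zero' : zdeg (0 : K[X]) = ⊥ := by simp [zdeg]

lemma zdeg_eq' {p : K[X]} (hp : p ≠ 0) : zdeg p = ((p.natDegree : ℤ) : WithBot ℤ) := by
  rw [zdeg, degree_eq_natDegree hp]; rfl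

lemma le_zdeg' {p : K[X]} {t : ℕ} (h : p.coeff t ≠ 0) : ((t : ℤ) : WithBot ℤ) ≤ zdeg p := by
  have hp : p ≠ 0 := fun h0 => h (by simp [h0])
  rw [zdeg_eq' hp]
  exact WithBot.coe_le_coe.mpr (by exact_mod_cast le_natDegree_of_ne_zero h)

lemma coeff_eq_zero_zdeg' {p : K[X]} {t : ℕ} (h : zdeg p < ((t : ℤ) : WithBot ℤ)) :
    p.coeff t = 0 := by
  by_contra hc; exact absurd h (not_lt.mpr (le_zdeg' hc))

lemma zdeg_le' {p : K[X]} {c : WithBot ℤ}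
    (h : ∀ t : ℕ, c < ((t : ℤ) : WithBot ℤ) → p.coeff t = 0) : zdeg p ≤ c := by
  by_cases hp : p = 0
  · simp [hp, zdeg_zero']
  · rw [zdeg_eq' hp]
    by_contra hlt
    have hcl : c < ((p.natDegree : ℤ) : WithBot ℤ) := lt_of_not_ge hlt
    exact hp (leadingCoeff_eq_zero.mp (h _ hcl))

lemma zdeg_mul' (p q : K[X]) : zdeg (p * q) = zdeg p + zdeg q := by
  by_cases hp : p = 0
  · simp [hp, zdeg_zero']
  by_cases hq : q = 0
  · simp [hq, zdeg_zero']
  rw [zdeg_eq' (mul_ne_zero hp hq), zdeg_eq' hp, zdeg_eq' hq, natDegree_mul hp hq]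
  push_cast
  rfl

lemma add_coe_le_iff' (a : WithBot ℤ) (c d : ℤ) :
    a + (c : WithBot ℤ) ≤ (d : WithBot ℤ) ↔ a ≤ ((d - c : ℤ) : WithBot ℤ) := by
  cases a with
  | bot => simp
  | coe x =>
    rw [← WithBot.coe_add, WithBot.coe_le_coe, WithBot.coe_le_coe]
    omega

lemma natDegree_le_of_zdeg' {p : K[X]} {e : ℤ} (h : zdeg p ≤ (e : WithBot ℤ)) :
    p.natDegree ≤ e.toNat := by
  by_cases hp : p = 0
  · simp [hp]
  rw [zdeg_eq' hp, WithBot.coe_le_coe] at h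
  omega

lemma eq_zero_of_zdeg_neg' {p : K[X]} {e : ℤ} (he : e < 0) (h : zdeg p ≤ (e : WithBot ℤ)) :
    p = 0 := by
  by_contra hp
  rw [zdeg_eq' hp, WithBot.coe_le_coe] at h
  omega

lemma coeff_mul_of_le' {p q : K[X]} {a b : ℕ} (ha : p.natDegree ≤ a) (hb : q.natDegree ≤ b) :
    (p * q).coeff (a + b) = p.coeff a * q.coeff b := by
  rw [coeff_mul]
  apply Finset.sum_eq_single (a, b)
  · intro x hx hne
    rw [Finset.HasAntidiagonal.mem_antidiagonal] at hx
    have hne' : x.1 ≠ a ∨ x.2 ≠ b := by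
      by_contra hcc
      push_neg at hcc
      exact hne (Prod.ext hcc.1 hcc.2)
    rcases lt_or_ge a x.1 with h | h
    · rw [coeff_eq_zero_of_natDegree_lt (lt_of_le_of_lt ha h), zero_mul]
    · have hb2 : b < x.2 := by omega
      rw [coeff_eq_zero_of_natDegree_lt (lt_of_le_of_lt hb hb2), mul_zero]
  · intro h
    simp [Finset.HasAntidiagonal.mem_antidiagonal] at h

end Aux

/-- Shifted predictable degree property: if `A` is `s`-row reduced with `s`-row degrees
`ds` (the rows of the `s`-leading matrix are linearly independent over `K`, so `A` has
full row rank), then for every nonzero `v`, `deg_s (v·A) = max_{i : v_i ≠ 0} (deg v_i + ds_i)`. -/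
theorem stmt14 {K : Type*} [Field K] {n m : ℕ} (s : Fin m → ℤ)
    (A : Matrix (Fin n) (Fin m) K[X]) (ds : Fin n → ℤ)
    (hds : ∀ i, (ds i : WithBot ℤ) = sdeg s (A i))
    (hred : LinearIndependent K (fun i (j : Fin m) =>
      if ds i - s j < 0 then (0 : K) else (A i j).coeff (ds i - s j).toNat))
    (v : Fin n → K[X]) (hv : v ≠ 0) :
    sdeg s (v ᵥ* A) =
      (Finset.univ.filter fun i => v i ≠ 0).sup
        fun i => ((((v i).natDegree : ℤ) + ds i : ℤ) : WithBot ℤ) := by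
  classical
  set F : Finset (Fin n) := Finset.univ.filter (fun i => v i ≠ 0) with hFdef
  have hmemF : ∀ i, v i ≠ 0 → i ∈ F := by
    intro i hi
    rw [hFdef, Finset.mem_filter]
    exact ⟨Finset.mem_univ i, hi⟩
  have hF : F.Nonempty := by
    obtain ⟨i, hi⟩ := Function.ne_iff.mp hv
    exact ⟨i, hmemF i (by simpa using hi)⟩
  set D : ℤ := F.sup' hF (fun i => ((v i).natDegree : ℤ) + ds i) with hDdef
  have hRHS : (F.sup fun i => ((((v i).natDegree : ℤ) + ds i : ℤ) : WithBot ℤ))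
      = (D : WithBot ℤ) := (Finset.coe_sup' hF _).symm
  rw [hRHS]
  -- row degree bound
  have hrow : ∀ i j, zdeg (A i j) ≤ ((ds i - s j : ℤ) : WithBot ℤ) := by
    intro i j
    have h1 : zdeg (A i j) + (s j : WithBot ℤ) ≤ sdeg s (A i) :=
      Finset.le_sup (f := fun j => zdeg (A i j) + (s j : WithBot ℤ)) (Finset.mem_univ j)
    rw [← hds i] at h1
    exact (add_coe_le_iff' _ _ _).mp h1
  have hvA : ∀ j, (v ᵥ* A) j = ∑ i, v i * A i j := by
    intro j
    simp [Matrix.vecMul, dotProduct]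
  have hle : ∀ i, v i ≠ 0 → ((v i).natDegree : ℤ) + ds i ≤ D :=
    fun i hi => Finset.le_sup' (f := fun i => ((v i).natDegree : ℤ) + ds i) (hmemF i hi)
  -- term-wise degree bound (for nonzero v i)
  have hterm : ∀ i j, v i ≠ 0 →
      zdeg (v i * A i j) ≤ ((((v i).natDegree : ℤ) + ds i - s j : ℤ) : WithBot ℤ) := by
    intro i j hvi
    rw [zdeg_mul', zdeg_eq' hvi]
    calc (((v i).natDegree : ℤ) : WithBot ℤ) + zdeg (A i j)
        ≤ (((v i).natDegree : ℤ) : WithBot ℤ) + ((ds i - s j : ℤ) : WithBot ℤ) :=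
          add_le_add_right (hrow i j) _
      _ = ((((v i).natDegree : ℤ) + ds i - s j : ℤ) : WithBot ℤ) := by
          rw [← WithBot.coe_add]
          exact congrArg _ (by ring)
  -- upper bound
  have hub : sdeg s (v ᵥ* A) ≤ (D : WithBot ℤ) := by
    apply Finset.sup_le
    intro j _
    rw [add_coe_le_iff']
    apply zdeg_le'
    intro t ht
    rw [hvA, finset_sum_coeff]
    apply Finset.sum_eq_zero
    intro i _
    by_cases hvi : v i = 0
    · simp [hvi]
    · apply coeff_eq_zero_zdeg'
      refine lt_of_le_of_lt (le_trans (hterm i j hvi) ?_) ht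
      rw [WithBot.coe_le_coe]
      have := hle i hvi
      omega
  -- lower bound
  have hlb : (D : WithBot ℤ) ≤ sdeg s (v ᵥ* A) := by
    obtain ⟨i0, hi0F, hi0⟩ := Finset.exists_mem_eq_sup' hF (fun i => ((v i).natDegree : ℤ) + ds i)
    have hvi0 : v i0 ≠ 0 := by
      rw [hFdef, Finset.mem_filter] at hi0F
      exact hi0F.2
    set L : Fin n → Fin m → K := fun i j =>
      if ds i - s j < 0 then (0 : K) else (A i j).coeff (ds i - s j).toNat with hLdef
    set c : Fin n → K := fun i =>
      if v i ≠ 0 ∧ ((v i).natDegree : ℤ) + ds i = D then (v i).leadingCoeff else 0 with hcdef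
    have hc0 : c i0 ≠ 0 := by
      rw [hcdef]
      simp only [if_pos (⟨hvi0, hi0.symm⟩ : v i0 ≠ 0 ∧ ((v i0).natDegree : ℤ) + ds i0 = D)]
      exact leadingCoeff_ne_zero.mpr hvi0
    have hcond_of : ∀ i, c i ≠ 0 → v i ≠ 0 ∧ ((v i).natDegree : ℤ) + ds i = D := by
      intro i hci
      by_contra hcnd
      rw [hcdef] at hci
      simp only [if_neg hcnd] at hci
      exact hci rfl
    have hSj : ∃ j, ∑ i, c i * L i j ≠ 0 := by
      by_contra h
      push_neg at h
      have hz : ∑ i, c i • L i = 0 := by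
        funext j
        rw [Finset.sum_apply]
        simpa [smul_eq_mul] using h j
      exact hc0 (Fintype.linearIndependent_iff.mp hred c hz i0)
    obtain ⟨j, hSj⟩ := hSj
    have hDs : 0 ≤ D - s j := by
      by_contra h
      push_neg at h
      apply hSj
      apply Finset.sum_eq_zero
      intro i _
      by_cases hci : c i = 0
      · simp [hci]
      · obtain ⟨hvi, hDi⟩ := hcond_of i hci
        have hneg : ds i - s j < 0 := by
          have : (0 : ℤ) ≤ ((v i).natDegree : ℤ) := Int.natCast_nonneg _
          omega
        rw [hLdef]
        simp only [if_pos hneg, mul_zero]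
    set T : ℕ := (D - s j).toNat with hTdef
    have hTD : (T : ℤ) = D - s j := Int.toNat_of_nonneg hDs
    have hcoeff : ((v ᵥ* A) j).coeff T = ∑ i, c i * L i j := by
      rw [hvA, finset_sum_coeff]
      apply Finset.sum_congr rfl
      intro i _
      by_cases hvi : v i = 0
      · have hci : c i = 0 := by
          rw [hcdef]; simp [hvi]
        simp [hvi, hci]
      by_cases hcond : ((v i).natDegree : ℤ) + ds i = D
      · by_cases hnegs : ds i - s j < 0
        · have hA0 : A i j = 0 := eq_zero_of_zdeg_neg' hnegs (hrow i j)
          rw [hLdef]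
          simp [hA0, if_pos hnegs]
        · push_neg at hnegs
          have hb : (A i j).natDegree ≤ (ds i - s j).toNat := natDegree_le_of_zdeg' (hrow i j)
          have hnn : ((ds i - s j).toNat : ℤ) = ds i - s j := Int.toNat_of_nonneg hnegs
          have hTsplit : T = (v i).natDegree + (ds i - s j).toNat := by omega
          rw [hTsplit, coeff_mul_of_le' (le_refl _) hb, hcdef, hLdef]
          simp only [if_pos (⟨hvi, hcond⟩ : v i ≠ 0 ∧ ((v i).natDegree : ℤ) + ds i = D),
            if_neg (not_lt.mpr hnegs)]
          rfl
      · have hci : c i = 0 := by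
          rw [hcdef]
          exact if_neg (fun hx => hcond hx.2)
        have hlt : zdeg (v i * A i j) < ((T : ℤ) : WithBot ℤ) := by
          refine lt_of_le_of_lt (hterm i j hvi) ?_
          rw [WithBot.coe_lt_coe]
          have h1 := hle i hvi
          omega
        rw [coeff_eq_zero_zdeg' hlt, hci, zero_mul]
    have hz : ((T : ℤ) : WithBot ℤ) ≤ zdeg ((v ᵥ* A) j) := by
      apply le_zdeg'
      rw [hcoeff]
      exact hSj
    calc (D : WithBot ℤ) = ((T : ℤ) : WithBot ℤ) + ((s j : ℤ) : WithBot ℤ) := by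
          rw [← WithBot.coe_add]
          exact congrArg _ (by omega)
      _ ≤ zdeg ((v ᵥ* A) j) + ((s j : ℤ) : WithBot ℤ) := add_le_add_left hz _
      _ ≤ sdeg s (v ᵥ* A) :=
          Finset.le_sup (f := fun j => zdeg ((v ᵥ* A) j) + (s j : WithBot ℤ)) (Finset.mem_univ j)
  exact le_antisymm hub hlb

end
end
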